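/- Let η₂, δ₁, μ₁, μ₂, Ē, F̄₁ > 0 and define f(Y₁) = η₂(Ē − μ₁Y₁)Y₁ / (μ₂(δ₁(F̄₁ − Y₁) + η₂Y₁)) on Γ₁ = [0, ξ₁) with ξ₁ = min(F̄₁, Ē/μ₁). Let Λ = (1 + η₂/δ₁)μ₁F̄₁ − Ē. If Λ ≤ 0, then ξ₁ = F̄₁ and f is strictly increasing on [0, F̄₁). -/
import Mathlib


open Set

/-- Motif (f) (shared kinase, two phosphatases): if
`Λ = (1 + η₂/δ₁)μ₁F̄₁ − Ē ≤ 0` then `ξ₁ = min(F̄₁, Ē/μ₁) = F̄₁` and the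
steady-state relation `f` is strictly increasing on `[0, F̄₁)`. -/
theorem motif_f_increasing (η₂ δ₁ μ₁ μ₂ Ebar F₁ : ℝ)
    (hη₂ : 0 < η₂) (hδ₁ : 0 < δ₁) (hμ₁ : 0 < μ₁) (hμ₂ : 0 < μ₂)
    (hE : 0 < Ebar) (hF₁ : 0 < F₁)
    (hΛ : (1 + η₂ / δ₁) * μ₁ * F₁ - Ebar ≤ 0) :
    let f : ℝ → ℝ := fun Y₁ =>
      η₂ * (Ebar - μ₁ * Y₁) * Y₁ / (μ₂ * (δ₁ * (F₁ - Y₁) + η₂ * Y₁))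
    min F₁ (Ebar / μ₁) = F₁ ∧ StrictMonoOn f (Ico 0 F₁) := by
  intro f
  have hE' : μ₁ * F₁ * δ₁ + η₂ * μ₁ * F₁ ≤ Ebar * δ₁ := by
    have h := mul_le_mul_of_nonneg_right (sub_nonpos.mp hΛ) hδ₁.le
    field_simp at h
    nlinarith [h]
  constructor
  · apply min_eq_left
    rw [le_div_iff₀ hμ₁]
    nlinarith
  · intro x hx y hy hxy
    obtain ⟨hx0, hxF⟩ := hx
    obtain ⟨hy0, hyF⟩ := hy
    have hdx : 0 < μ₂ * (δ₁ * (F₁ - x) + η₂ * x) :=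
      mul_pos hμ₂ (by nlinarith)
    have hdy : 0 < μ₂ * (δ₁ * (F₁ - y) + η₂ * y) :=
      mul_pos hμ₂ (by nlinarith)
    show η₂ * (Ebar - μ₁ * x) * x / (μ₂ * (δ₁ * (F₁ - x) + η₂ * x)) <
      η₂ * (Ebar - μ₁ * y) * y / (μ₂ * (δ₁ * (F₁ - y) + η₂ * y))
    rw [div_lt_div_iff₀ hdx hdy]
    have key : 0 < δ₁ * F₁ * Ebar - δ₁ * F₁ * μ₁ * (x + y) - (η₂ - δ₁) * μ₁ * (x * y) := by
      have h1 : 0 < (F₁ - x) * (F₁ - y) := mul_pos (by linarith) (by linarith)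
      have h2 : x * y < F₁ * F₁ := by nlinarith
      have h3 := mul_le_mul_of_nonneg_left hE' (by positivity : (0:ℝ) ≤ F₁)
      nlinarith [mul_pos hμ₁ hδ₁, mul_pos (mul_pos hμ₁ hδ₁) h1,
        mul_pos (mul_pos hμ₁ hη₂) (sub_pos.mpr h2), mul_pos hμ₁ hη₂]
    nlinarith [mul_pos (mul_pos hη₂ hμ₂) (mul_pos (sub_pos.mpr hxy) key)]
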